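/- Let Ψ⁺, Ψ⁻ and Φ be smooth complex-valued functions on Ω, write 𝓛 = 𝓛⁽⁺²⁾, and suppose 𝓛(𝓛−2)Φ = Ψ⁺ − (Ψ⁻)* on Ω. Set Ψᴰ := Ψ⁺ − (Ψ⁻)* and Ψᴿ := Ψ⁺ + (Ψ⁻)* + 12M ∂ₜΦ. Then the following algebraic identity holds on Ω: LLΨ⁺ + L̲L̲(Ψ⁻)* + (1/(6M))𝓛(𝓛−2)( LΨ⁺ − L̲(Ψ⁻)* ) = (1/2)(LL + L̲L̲)Ψᴿ + (1/(12M))𝓛(𝓛−2)(L − L̲)Ψᴿ − 6M(LL + L̲L̲)∂ₜΦ + (1/(6M))𝓛(𝓛−2)∂ₜΨᴰ. -/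

import Mathlib

/- Schwarzschild-Anti-de Sitter background: basic operators on functions
   u(t, r, ϑ, φ) with values in ℂ. -/

noncomputable section

open Filter Topology Set

namespace Grav

abbrev F4 : Type := ℝ → ℝ → ℝ → ℝ → ℂ

/-- `Δ(r) = r² + k²r⁴ − 2Mr`. -/
def Del (M k r : ℝ) : ℝ := r ^ 2 + k ^ 2 * r ^ 4 - 2 * M * r

/-- `∂ₜ`. -/
def dT (u : F4) : F4 := fun t r ϑ φ => deriv (fun s => u s r ϑ φ) t
/-- `∂ᵣ`. -/
def dR (u : F4) : F4 := fun t r ϑ φ => deriv (fun s => u t s ϑ φ) r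
/-- `∂_ϑ`. -/
def dTh (u : F4) : F4 := fun t r ϑ φ => deriv (fun s => u t r s φ) ϑ
/-- `∂_φ`. -/
def dPh (u : F4) : F4 := fun t r ϑ φ => deriv (fun s => u t r ϑ s) φ

/-- `L u = ∂ₜ u + (Δ/r²) ∂ᵣ u`. -/
def opL (M k : ℝ) (u : F4) : F4 := fun t r ϑ φ =>
  dT u t r ϑ φ + ((Del M k r / r ^ 2 : ℝ) : ℂ) * dR u t r ϑ φ

/-- `L̲ u = ∂ₜ u − (Δ/r²) ∂ᵣ u`. -/
def opLb (M k : ℝ) (u : F4) : F4 := fun t r ϑ φ =>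
  dT u t r ϑ φ - ((Del M k r / r ^ 2 : ℝ) : ℂ) * dR u t r ϑ φ

/-- `w = Δ/r⁴`. -/
def ww (M k r : ℝ) : ℝ := Del M k r / r ^ 4
/-- `w′ = w·(6M − 2r)/r²`. -/
def wwP (M k r : ℝ) : ℝ := ww M k r * (6 * M - 2 * r) / r ^ 2

/-- The angular operator `𝓛⁽⁺²⁾`. -/
def angP (u : F4) : F4 := fun t r ϑ φ =>
  -(Real.sin ϑ : ℂ)⁻¹ * deriv (fun x => (Real.sin x : ℂ) * dTh u t r x φ) ϑ
  - (((Real.sin ϑ) ^ 2 : ℝ) : ℂ)⁻¹ * dPh (dPh u) t r ϑ φ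
  - 4 * Complex.I * ((Real.cos ϑ / (Real.sin ϑ) ^ 2 : ℝ) : ℂ) * dPh u t r ϑ φ
  + 4 * (((Real.cos ϑ / Real.sin ϑ) ^ 2 : ℝ) : ℂ) * u t r ϑ φ
  + 4 * u t r ϑ φ

/-- The angular operator `𝓛⁽⁻²⁾`. -/
def angM (u : F4) : F4 := fun t r ϑ φ =>
  -(Real.sin ϑ : ℂ)⁻¹ * deriv (fun x => (Real.sin x : ℂ) * dTh u t r x φ) ϑ
  - (((Real.sin ϑ) ^ 2 : ℝ) : ℂ)⁻¹ * dPh (dPh u) t r ϑ φ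
  + 4 * Complex.I * ((Real.cos ϑ / (Real.sin ϑ) ^ 2 : ℝ) : ℂ) * dPh u t r ϑ φ
  + 4 * (((Real.cos ϑ / Real.sin ϑ) ^ 2 : ℝ) : ℂ) * u t r ϑ φ
  + 4 * u t r ϑ φ

/-- The Teukolsky operator `𝔗⁽⁺²⁾u = −LL̲u + 2(w′/w)L̲u − w(𝓛⁽⁺²⁾ − 2 + 6M/r)u`. -/
def Tp (M k : ℝ) (u : F4) : F4 := fun t r ϑ φ =>
  - opL M k (opLb M k u) t r ϑ φ
  + 2 * ((wwP M k r / ww M k r : ℝ) : ℂ) * opLb M k u t r ϑ φ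
  - ((ww M k r : ℝ) : ℂ) *
      (angP u t r ϑ φ - 2 * u t r ϑ φ + ((6 * M / r : ℝ) : ℂ) * u t r ϑ φ)

/-- The Teukolsky operator `𝔗⁽⁻²⁾u = −LL̲u − 2(w′/w)Lu − w(𝓛⁽⁻²⁾ − 2 + 6M/r)u`. -/
def Tm (M k : ℝ) (u : F4) : F4 := fun t r ϑ φ =>
  - opL M k (opLb M k u) t r ϑ φ
  - 2 * ((wwP M k r / ww M k r : ℝ) : ℂ) * opL M k u t r ϑ φ
  - ((ww M k r : ℝ) : ℂ) *
      (angM u t r ϑ φ - 2 * u t r ϑ φ + ((6 * M / r : ℝ) : ℂ) * u t r ϑ φ)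

/-- The Regge–Wheeler operator `𝕽⁽⁺²⁾u = −LL̲u − w(𝓛⁽⁺²⁾ − 6M/r)u`. -/
def RWp (M k : ℝ) (u : F4) : F4 := fun t r ϑ φ =>
  - opL M k (opLb M k u) t r ϑ φ
  - ((ww M k r : ℝ) : ℂ) * (angP u t r ϑ φ - ((6 * M / r : ℝ) : ℂ) * u t r ϑ φ)

/-- The Regge–Wheeler operator `𝕽⁽⁻²⁾u = −LL̲u − w(𝓛⁽⁻²⁾ − 6M/r)u`. -/
def RWm (M k : ℝ) (u : F4) : F4 := fun t r ϑ φ =>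
  - opL M k (opLb M k u) t r ϑ φ
  - ((ww M k r : ℝ) : ℂ) * (angM u t r ϑ φ - ((6 * M / r : ℝ) : ℂ) * u t r ϑ φ)

/-- The exterior region `Ω = {r > r₊, 0 < ϑ < π}` (as a subset of ℝ⁴). -/
def OmSet (rp : ℝ) : Set (ℝ × ℝ × ℝ × ℝ) :=
  {p | rp < p.2.1 ∧ 0 < p.2.2.1 ∧ p.2.2.1 < Real.pi}

/-- `u` is smooth on `Ω`. -/
def SmoothOnOm (rp : ℝ) (u : F4) : Prop :=
  ContDiffOn ℝ (⊤ : ℕ∞)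
    (fun p : ℝ × ℝ × ℝ × ℝ => u p.1 p.2.1 p.2.2.1 p.2.2.2) (OmSet rp)

/-- Multiplication by `w⁻¹`. -/
def winv (M k : ℝ) (u : F4) : F4 := fun t r ϑ φ => ((ww M k r : ℝ) : ℂ)⁻¹ * u t r ϑ φ
/-- Multiplication by `w`. -/
def wmul (M k : ℝ) (u : F4) : F4 := fun t r ϑ φ => ((ww M k r : ℝ) : ℂ) * u t r ϑ φ
/-- Pointwise complex conjugation. -/
def conjF (u : F4) : F4 := fun t r ϑ φ => (starRingEnd ℂ) (u t r ϑ φ)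

/-- `𝓛⁽⁺²⁾(𝓛⁽⁺²⁾ − 2)`. -/
def angSqP (u : F4) : F4 := angP (fun t r ϑ φ => angP u t r ϑ φ - 2 * u t r ϑ φ)
/-- `𝓛⁽⁻²⁾(𝓛⁽⁻²⁾ − 2)`. -/
def angSqM (u : F4) : F4 := angM (fun t r ϑ φ => angM u t r ϑ φ - 2 * u t r ϑ φ)

/-- `𝓛⁽⁺²⁾(𝓛⁽⁺²⁾ − 2) + 12M∂ₜ`. -/
def TSp (M : ℝ) (u : F4) : F4 := fun t r ϑ φ =>
  angSqP u t r ϑ φ + 12 * (M : ℂ) * dT u t r ϑ φ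
/-- `𝓛⁽⁻²⁾(𝓛⁽⁻²⁾ − 2) − 12M∂ₜ`. -/
def TSm (M : ℝ) (u : F4) : F4 := fun t r ϑ φ =>
  angSqM u t r ϑ φ - 12 * (M : ℂ) * dT u t r ϑ φ

/-! ### Infrastructure -/

abbrev P4 : Type := ℝ × ℝ × ℝ × ℝ

/-- Uncurried version of a function of four variables. -/
def unc (u : F4) : P4 → ℂ := fun p => u p.1 p.2.1 p.2.2.1 p.2.2.2

lemma isOpen_om (rp : ℝ) : IsOpen (OmSet rp) := by
  have : OmSet rp = ((fun p : P4 => p.2.1) ⁻¹' Ioi rp) ∩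
      ((fun p : P4 => p.2.2.1) ⁻¹' Ioo 0 Real.pi) := by
    ext p; simp [OmSet, and_assoc]
  rw [this]
  exact (isOpen_Ioi.preimage (by fun_prop)).inter (isOpen_Ioo.preimage (by fun_prop))

variable {rp M k : ℝ} {u v : F4} {t r ϑ φ : ℝ}

lemma hasDerivAt_sliceT (u : F4) (hu : DifferentiableAt ℝ (unc u) (t, r, ϑ, φ)) :
    HasDerivAt (fun s => u s r ϑ φ) (fderiv ℝ (unc u) (t, r, ϑ, φ) (1, 0, 0, 0)) t :=
  by have := hu.hasFDerivAt.comp_hasDerivAt t ((hasDerivAt_id t).prodMk (hasDerivAt_const t (r, ϑ, φ))); exact this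

lemma hasDerivAt_sliceR (u : F4) (hu : DifferentiableAt ℝ (unc u) (t, r, ϑ, φ)) :
    HasDerivAt (fun s => u t s ϑ φ) (fderiv ℝ (unc u) (t, r, ϑ, φ) (0, 1, 0, 0)) r :=
  by have := hu.hasFDerivAt.comp_hasDerivAt r ((hasDerivAt_const r t).prodMk
    ((hasDerivAt_id r).prodMk (hasDerivAt_const r (ϑ, φ)))); exact this

lemma hasDerivAt_sliceTh (u : F4) (hu : DifferentiableAt ℝ (unc u) (t, r, ϑ, φ)) :
    HasDerivAt (fun s => u t r s φ) (fderiv ℝ (unc u) (t, r, ϑ, φ) (0, 0, 1, 0)) ϑ :=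
  by have := hu.hasFDerivAt.comp_hasDerivAt ϑ ((hasDerivAt_const ϑ t).prodMk
    ((hasDerivAt_const ϑ r).prodMk ((hasDerivAt_id ϑ).prodMk (hasDerivAt_const ϑ φ)))); exact this

lemma hasDerivAt_slicePh (u : F4) (hu : DifferentiableAt ℝ (unc u) (t, r, ϑ, φ)) :
    HasDerivAt (fun s => u t r ϑ s) (fderiv ℝ (unc u) (t, r, ϑ, φ) (0, 0, 0, 1)) φ :=
  by have := hu.hasFDerivAt.comp_hasDerivAt φ ((hasDerivAt_const φ t).prodMk
    ((hasDerivAt_const φ r).prodMk ((hasDerivAt_const φ ϑ).prodMk (hasDerivAt_id φ)))); exact this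

lemma dT_eq (u : F4) (hu : DifferentiableAt ℝ (unc u) (t, r, ϑ, φ)) :
    dT u t r ϑ φ = fderiv ℝ (unc u) (t, r, ϑ, φ) (1, 0, 0, 0) :=
  (hasDerivAt_sliceT u hu).deriv

lemma dR_eq (u : F4) (hu : DifferentiableAt ℝ (unc u) (t, r, ϑ, φ)) :
    dR u t r ϑ φ = fderiv ℝ (unc u) (t, r, ϑ, φ) (0, 1, 0, 0) :=
  (hasDerivAt_sliceR u hu).deriv

lemma dTh_eq (u : F4) (hu : DifferentiableAt ℝ (unc u) (t, r, ϑ, φ)) :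
    dTh u t r ϑ φ = fderiv ℝ (unc u) (t, r, ϑ, φ) (0, 0, 1, 0) :=
  (hasDerivAt_sliceTh u hu).deriv

lemma dPh_eq (u : F4) (hu : DifferentiableAt ℝ (unc u) (t, r, ϑ, φ)) :
    dPh u t r ϑ φ = fderiv ℝ (unc u) (t, r, ϑ, φ) (0, 0, 0, 1) :=
  (hasDerivAt_slicePh u hu).deriv

lemma contDiffAt_om (hu : SmoothOnOm rp u) (hp : (t, r, ϑ, φ) ∈ OmSet rp) :
    ContDiffAt ℝ (⊤ : ℕ∞) (unc u) (t, r, ϑ, φ) :=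
  hu.contDiffAt ((isOpen_om rp).mem_nhds hp)

lemma diffAt_om (hu : SmoothOnOm rp u) (hp : (t, r, ϑ, φ) ∈ OmSet rp) :
    DifferentiableAt ℝ (unc u) (t, r, ϑ, φ) :=
  (contDiffAt_om hu hp).differentiableAt (by simp)

/-- The fderiv applied to a fixed vector, as a function of four variables. -/
def pdv (w : P4) (u : F4) : F4 := fun t r ϑ φ => fderiv ℝ (unc u) (t, r, ϑ, φ) w

lemma smOm_pdv (hu : SmoothOnOm rp u) (w : P4) : SmoothOnOm rp (pdv w u) := by
  have h : ContDiffOn ℝ (⊤ : ℕ∞) (fderiv ℝ (unc u)) (OmSet rp) :=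
    ContDiffOn.fderiv_of_isOpen hu (isOpen_om rp) (by exact_mod_cast le_top)
  exact h.clm_apply contDiffOn_const

lemma smOm_dT (hu : SmoothOnOm rp u) : SmoothOnOm rp (dT u) := by
  refine (smOm_pdv hu (1,0,0,0)).congr fun q hq => ?_
  obtain ⟨t, r, ϑ, φ⟩ := q
  exact dT_eq u (diffAt_om hu hq)

lemma smOm_dR (hu : SmoothOnOm rp u) : SmoothOnOm rp (dR u) := by
  refine (smOm_pdv hu (0,1,0,0)).congr fun q hq => ?_
  obtain ⟨t, r, ϑ, φ⟩ := q
  exact dR_eq u (diffAt_om hu hq)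

lemma smOm_dTh (hu : SmoothOnOm rp u) : SmoothOnOm rp (dTh u) := by
  refine (smOm_pdv hu (0,0,1,0)).congr fun q hq => ?_
  obtain ⟨t, r, ϑ, φ⟩ := q
  exact dTh_eq u (diffAt_om hu hq)

lemma smOm_dPh (hu : SmoothOnOm rp u) : SmoothOnOm rp (dPh u) := by
  refine (smOm_pdv hu (0,0,0,1)).congr fun q hq => ?_
  obtain ⟨t, r, ϑ, φ⟩ := q
  exact dPh_eq u (diffAt_om hu hq)

lemma fderiv2_apply (hu : SmoothOnOm rp u) (hp : (t, r, ϑ, φ) ∈ OmSet rp) (w x : P4) :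
    fderiv ℝ (unc (pdv w u)) (t, r, ϑ, φ) x =
      fderiv ℝ (fderiv ℝ (unc u)) (t, r, ϑ, φ) x w := by
  have hd : DifferentiableAt ℝ (fderiv ℝ (unc u)) (t, r, ϑ, φ) := by
    have h : ContDiffOn ℝ (⊤ : ℕ∞) (fderiv ℝ (unc u)) (OmSet rp) :=
      ContDiffOn.fderiv_of_isOpen hu (isOpen_om rp) (by exact_mod_cast le_top)
    exact ((h.contDiffAt ((isOpen_om rp).mem_nhds hp)).differentiableAt
      (by simp))
  have hcomp : HasFDerivAt (unc (pdv w u))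
      ((ContinuousLinearMap.apply ℝ ℂ w).comp (fderiv ℝ (fderiv ℝ (unc u)) (t, r, ϑ, φ)))
      (t, r, ϑ, φ) :=
    (ContinuousLinearMap.apply ℝ ℂ w).hasFDerivAt.comp _ hd.hasFDerivAt
  rw [hcomp.fderiv]
  rfl

lemma clairaut (hu : SmoothOnOm rp u) (hp : (t, r, ϑ, φ) ∈ OmSet rp) (w x : P4) :
    fderiv ℝ (fderiv ℝ (unc u)) (t, r, ϑ, φ) x w =
      fderiv ℝ (fderiv ℝ (unc u)) (t, r, ϑ, φ) w x :=
  ((contDiffAt_om hu hp).isSymmSndFDerivAt (by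
    rw [minSmoothness_of_isRCLikeNormedField]; exact WithTop.coe_le_coe.mpr le_top)).eq x w

/-! #### Locality of partial derivatives -/

lemma dT_congr (h : ∀ t r ϑ φ, (t, r, ϑ, φ) ∈ OmSet rp → u t r ϑ φ = v t r ϑ φ)
    (hp : (t, r, ϑ, φ) ∈ OmSet rp) : dT u t r ϑ φ = dT v t r ϑ φ := by
  apply Filter.EventuallyEq.deriv_eq
  filter_upwards with s
  exact h s r ϑ φ hp

lemma dPh_congr (h : ∀ t r ϑ φ, (t, r, ϑ, φ) ∈ OmSet rp → u t r ϑ φ = v t r ϑ φ)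
    (hp : (t, r, ϑ, φ) ∈ OmSet rp) : dPh u t r ϑ φ = dPh v t r ϑ φ := by
  apply Filter.EventuallyEq.deriv_eq
  filter_upwards with s
  exact h t r ϑ s hp

lemma dR_congr (h : ∀ t r ϑ φ, (t, r, ϑ, φ) ∈ OmSet rp → u t r ϑ φ = v t r ϑ φ)
    (hp : (t, r, ϑ, φ) ∈ OmSet rp) : dR u t r ϑ φ = dR v t r ϑ φ := by
  apply Filter.EventuallyEq.deriv_eq
  filter_upwards [Ioi_mem_nhds hp.1] with s hs
  exact h t s ϑ φ ⟨hs, hp.2⟩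

lemma dTh_congr (h : ∀ t r ϑ φ, (t, r, ϑ, φ) ∈ OmSet rp → u t r ϑ φ = v t r ϑ φ)
    (hp : (t, r, ϑ, φ) ∈ OmSet rp) : dTh u t r ϑ φ = dTh v t r ϑ φ := by
  apply Filter.EventuallyEq.deriv_eq
  filter_upwards [Ioo_mem_nhds hp.2.1 hp.2.2] with s hs
  exact h t r s φ ⟨hp.1, hs.1, hs.2⟩

/-! #### Commutation of partial derivatives (Clairaut) -/

lemma dT_pdv (hu : SmoothOnOm rp u) (hp : (t, r, ϑ, φ) ∈ OmSet rp) (w : P4) :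
    dT (pdv w u) t r ϑ φ = fderiv ℝ (fderiv ℝ (unc u)) (t, r, ϑ, φ) (1,0,0,0) w := by
  rw [dT_eq _ (diffAt_om (smOm_pdv hu w) hp), fderiv2_apply hu hp]

lemma dR_pdv (hu : SmoothOnOm rp u) (hp : (t, r, ϑ, φ) ∈ OmSet rp) (w : P4) :
    dR (pdv w u) t r ϑ φ = fderiv ℝ (fderiv ℝ (unc u)) (t, r, ϑ, φ) (0,1,0,0) w := by
  rw [dR_eq _ (diffAt_om (smOm_pdv hu w) hp), fderiv2_apply hu hp]

lemma dTh_pdv (hu : SmoothOnOm rp u) (hp : (t, r, ϑ, φ) ∈ OmSet rp) (w : P4) :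
    dTh (pdv w u) t r ϑ φ = fderiv ℝ (fderiv ℝ (unc u)) (t, r, ϑ, φ) (0,0,1,0) w := by
  rw [dTh_eq _ (diffAt_om (smOm_pdv hu w) hp), fderiv2_apply hu hp]

lemma dPh_pdv (hu : SmoothOnOm rp u) (hp : (t, r, ϑ, φ) ∈ OmSet rp) (w : P4) :
    dPh (pdv w u) t r ϑ φ = fderiv ℝ (fderiv ℝ (unc u)) (t, r, ϑ, φ) (0,0,0,1) w := by
  rw [dPh_eq _ (diffAt_om (smOm_pdv hu w) hp), fderiv2_apply hu hp]

lemma dT_eq_pdv (hu : SmoothOnOm rp u) : ∀ t r ϑ φ, (t, r, ϑ, φ) ∈ OmSet rp →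
    dT u t r ϑ φ = pdv (1,0,0,0) u t r ϑ φ := fun _ _ _ _ hq => dT_eq u (diffAt_om hu hq)
lemma dR_eq_pdv (hu : SmoothOnOm rp u) : ∀ t r ϑ φ, (t, r, ϑ, φ) ∈ OmSet rp →
    dR u t r ϑ φ = pdv (0,1,0,0) u t r ϑ φ := fun _ _ _ _ hq => dR_eq u (diffAt_om hu hq)
lemma dTh_eq_pdv (hu : SmoothOnOm rp u) : ∀ t r ϑ φ, (t, r, ϑ, φ) ∈ OmSet rp →
    dTh u t r ϑ φ = pdv (0,0,1,0) u t r ϑ φ := fun _ _ _ _ hq => dTh_eq u (diffAt_om hu hq)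
lemma dPh_eq_pdv (hu : SmoothOnOm rp u) : ∀ t r ϑ φ, (t, r, ϑ, φ) ∈ OmSet rp →
    dPh u t r ϑ φ = pdv (0,0,0,1) u t r ϑ φ := fun _ _ _ _ hq => dPh_eq u (diffAt_om hu hq)

lemma dT_dR_comm (hu : SmoothOnOm rp u) (hp : (t, r, ϑ, φ) ∈ OmSet rp) :
    dT (dR u) t r ϑ φ = dR (dT u) t r ϑ φ := by
  rw [dT_congr (dR_eq_pdv hu) hp, dT_pdv hu hp,
    clairaut hu hp, ← dR_pdv hu hp,
    dR_congr (fun a b c d hq => (dT_eq_pdv hu a b c d hq).symm) hp]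

lemma dTh_dT_comm (hu : SmoothOnOm rp u) (hp : (t, r, ϑ, φ) ∈ OmSet rp) :
    dTh (dT u) t r ϑ φ = dT (dTh u) t r ϑ φ := by
  rw [dTh_congr (dT_eq_pdv hu) hp, dTh_pdv hu hp,
    clairaut hu hp, ← dT_pdv hu hp,
    dT_congr (fun a b c d hq => (dTh_eq_pdv hu a b c d hq).symm) hp]

lemma dTh_dR_comm (hu : SmoothOnOm rp u) (hp : (t, r, ϑ, φ) ∈ OmSet rp) :
    dTh (dR u) t r ϑ φ = dR (dTh u) t r ϑ φ := by
  rw [dTh_congr (dR_eq_pdv hu) hp, dTh_pdv hu hp,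
    clairaut hu hp, ← dR_pdv hu hp,
    dR_congr (fun a b c d hq => (dTh_eq_pdv hu a b c d hq).symm) hp]

lemma dPh_dT_comm (hu : SmoothOnOm rp u) (hp : (t, r, ϑ, φ) ∈ OmSet rp) :
    dPh (dT u) t r ϑ φ = dT (dPh u) t r ϑ φ := by
  rw [dPh_congr (dT_eq_pdv hu) hp, dPh_pdv hu hp,
    clairaut hu hp, ← dT_pdv hu hp,
    dT_congr (fun a b c d hq => (dPh_eq_pdv hu a b c d hq).symm) hp]

lemma dPh_dR_comm (hu : SmoothOnOm rp u) (hp : (t, r, ϑ, φ) ∈ OmSet rp) :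
    dPh (dR u) t r ϑ φ = dR (dPh u) t r ϑ φ := by
  rw [dPh_congr (dR_eq_pdv hu) hp, dPh_pdv hu hp,
    clairaut hu hp, ← dR_pdv hu hp,
    dR_congr (fun a b c d hq => (dPh_eq_pdv hu a b c d hq).symm) hp]

/-! #### Slice differentiability -/

lemma sdT (hu : SmoothOnOm rp u) (hp : (t, r, ϑ, φ) ∈ OmSet rp) :
    DifferentiableAt ℝ (fun s => u s r ϑ φ) t :=
  (hasDerivAt_sliceT u (diffAt_om hu hp)).differentiableAt

lemma sdR (hu : SmoothOnOm rp u) (hp : (t, r, ϑ, φ) ∈ OmSet rp) :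
    DifferentiableAt ℝ (fun s => u t s ϑ φ) r :=
  (hasDerivAt_sliceR u (diffAt_om hu hp)).differentiableAt

lemma sdTh (hu : SmoothOnOm rp u) (hp : (t, r, ϑ, φ) ∈ OmSet rp) :
    DifferentiableAt ℝ (fun s => u t r s φ) ϑ :=
  (hasDerivAt_sliceTh u (diffAt_om hu hp)).differentiableAt

lemma sdPh (hu : SmoothOnOm rp u) (hp : (t, r, ϑ, φ) ∈ OmSet rp) :
    DifferentiableAt ℝ (fun s => u t r ϑ s) φ :=
  (hasDerivAt_slicePh u (diffAt_om hu hp)).differentiableAt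

/-! #### Pointwise linearity of partial derivatives -/

section ptwise
variable (u v : F4) (c : ℂ) (h : ℝ → ℂ) {t r ϑ φ : ℝ}

lemma dT_add (hu : DifferentiableAt ℝ (fun s => u s r ϑ φ) t)
    (hv : DifferentiableAt ℝ (fun s => v s r ϑ φ) t) :
    dT (fun a b c d => u a b c d + v a b c d) t r ϑ φ = dT u t r ϑ φ + dT v t r ϑ φ :=
  deriv_add hu hv

lemma dR_add (hu : DifferentiableAt ℝ (fun s => u t s ϑ φ) r)
    (hv : DifferentiableAt ℝ (fun s => v t s ϑ φ) r) :
    dR (fun a b c d => u a b c d + v a b c d) t r ϑ φ = dR u t r ϑ φ + dR v t r ϑ φ :=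
  deriv_add hu hv

lemma dTh_add (hu : DifferentiableAt ℝ (fun s => u t r s φ) ϑ)
    (hv : DifferentiableAt ℝ (fun s => v t r s φ) ϑ) :
    dTh (fun a b c d => u a b c d + v a b c d) t r ϑ φ = dTh u t r ϑ φ + dTh v t r ϑ φ :=
  deriv_add hu hv

lemma dPh_add (hu : DifferentiableAt ℝ (fun s => u t r ϑ s) φ)
    (hv : DifferentiableAt ℝ (fun s => v t r ϑ s) φ) :
    dPh (fun a b c d => u a b c d + v a b c d) t r ϑ φ = dPh u t r ϑ φ + dPh v t r ϑ φ :=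
  deriv_add hu hv

lemma dT_sub (hu : DifferentiableAt ℝ (fun s => u s r ϑ φ) t)
    (hv : DifferentiableAt ℝ (fun s => v s r ϑ φ) t) :
    dT (fun a b c d => u a b c d - v a b c d) t r ϑ φ = dT u t r ϑ φ - dT v t r ϑ φ :=
  deriv_sub hu hv

lemma dR_sub (hu : DifferentiableAt ℝ (fun s => u t s ϑ φ) r)
    (hv : DifferentiableAt ℝ (fun s => v t s ϑ φ) r) :
    dR (fun a b c d => u a b c d - v a b c d) t r ϑ φ = dR u t r ϑ φ - dR v t r ϑ φ :=
  deriv_sub hu hv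

lemma dTh_sub (hu : DifferentiableAt ℝ (fun s => u t r s φ) ϑ)
    (hv : DifferentiableAt ℝ (fun s => v t r s φ) ϑ) :
    dTh (fun a b c d => u a b c d - v a b c d) t r ϑ φ = dTh u t r ϑ φ - dTh v t r ϑ φ :=
  deriv_sub hu hv

lemma dPh_sub (hu : DifferentiableAt ℝ (fun s => u t r ϑ s) φ)
    (hv : DifferentiableAt ℝ (fun s => v t r ϑ s) φ) :
    dPh (fun a b c d => u a b c d - v a b c d) t r ϑ φ = dPh u t r ϑ φ - dPh v t r ϑ φ :=
  deriv_sub hu hv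

lemma dT_cmul (hu : DifferentiableAt ℝ (fun s => u s r ϑ φ) t) :
    dT (fun a b c' d => c * u a b c' d) t r ϑ φ = c * dT u t r ϑ φ :=
  deriv_const_mul c hu

lemma dR_cmul (hu : DifferentiableAt ℝ (fun s => u t s ϑ φ) r) :
    dR (fun a b c' d => c * u a b c' d) t r ϑ φ = c * dR u t r ϑ φ :=
  deriv_const_mul c hu

lemma dTh_cmul (hu : DifferentiableAt ℝ (fun s => u t r s φ) ϑ) :
    dTh (fun a b c' d => c * u a b c' d) t r ϑ φ = c * dTh u t r ϑ φ :=
  deriv_const_mul c hu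

lemma dPh_cmul (hu : DifferentiableAt ℝ (fun s => u t r ϑ s) φ) :
    dPh (fun a b c' d => c * u a b c' d) t r ϑ φ = c * dPh u t r ϑ φ :=
  deriv_const_mul c hu

/-- `∂ₜ` of an `r`-coefficient times a function. -/
lemma dT_rmul (hu : DifferentiableAt ℝ (fun s => u s r ϑ φ) t) :
    dT (fun a b c' d => h b * u a b c' d) t r ϑ φ = h r * dT u t r ϑ φ :=
  deriv_const_mul (h r) hu

lemma dTh_rmul (hu : DifferentiableAt ℝ (fun s => u t r s φ) ϑ) :
    dTh (fun a b c' d => h b * u a b c' d) t r ϑ φ = h r * dTh u t r ϑ φ :=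
  deriv_const_mul (h r) hu

lemma dPh_rmul (hu : DifferentiableAt ℝ (fun s => u t r ϑ s) φ) :
    dPh (fun a b c' d => h b * u a b c' d) t r ϑ φ = h r * dPh u t r ϑ φ :=
  deriv_const_mul (h r) hu

/-- `∂ᵣ` of an `r`-coefficient times a function: product rule. -/
lemma dR_rmul (hh : DifferentiableAt ℝ h r) (hu : DifferentiableAt ℝ (fun s => u t s ϑ φ) r) :
    dR (fun a b c' d => h b * u a b c' d) t r ϑ φ
      = deriv h r * u t r ϑ φ + h r * dR u t r ϑ φ :=
  deriv_mul hh hu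

/-- `∂ₜ` of a `ϑ`-coefficient times a function. -/
lemma dT_thmul (hu : DifferentiableAt ℝ (fun s => u s r ϑ φ) t) :
    dT (fun a b c' d => h c' * u a b c' d) t r ϑ φ = h ϑ * dT u t r ϑ φ :=
  deriv_const_mul (h ϑ) hu

lemma dR_thmul (hu : DifferentiableAt ℝ (fun s => u t s ϑ φ) r) :
    dR (fun a b c' d => h c' * u a b c' d) t r ϑ φ = h ϑ * dR u t r ϑ φ :=
  deriv_const_mul (h ϑ) hu

end ptwise

/-! #### Smoothness closure -/

lemma smOm_add (hu : SmoothOnOm rp u) (hv : SmoothOnOm rp v) :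
    SmoothOnOm rp (fun a b c d => u a b c d + v a b c d) := ContDiffOn.add hu hv

lemma smOm_sub (hu : SmoothOnOm rp u) (hv : SmoothOnOm rp v) :
    SmoothOnOm rp (fun a b c d => u a b c d - v a b c d) := ContDiffOn.sub hu hv

lemma smOm_cmul (c : ℂ) (hu : SmoothOnOm rp u) :
    SmoothOnOm rp (fun a b c' d => c * u a b c' d) := ContDiffOn.mul contDiffOn_const hu

lemma smOm_conj (hu : SmoothOnOm rp u) : SmoothOnOm rp (conjF u) :=
  Complex.conjCLE.contDiff.comp_contDiffOn hu

/-- Multiplication by a smooth coefficient depending on `r` only. -/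
lemma smOm_rmul {h : ℝ → ℂ} (hh : ContDiffOn ℝ (⊤ : ℕ∞) h (Ioi rp))
    (hu : SmoothOnOm rp u) : SmoothOnOm rp (fun a b c d => h b * u a b c d) := by
  refine ContDiffOn.mul ?_ hu
  exact hh.comp (contDiff_snd.fst.contDiffOn (s := OmSet rp)) fun p hp => hp.1

/-- Multiplication by a smooth coefficient depending on `ϑ` only. -/
lemma smOm_thmul {h : ℝ → ℂ} (hh : ContDiffOn ℝ (⊤ : ℕ∞) h (Ioo 0 Real.pi))
    (hu : SmoothOnOm rp u) : SmoothOnOm rp (fun a b c d => h c * u a b c d) := by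
  refine ContDiffOn.mul ?_ hu
  exact hh.comp (contDiff_snd.snd.fst.contDiffOn (s := OmSet rp)) fun p hp => ⟨hp.2.1, hp.2.2⟩

/-- The coefficient `Δ/r²` (complexified) is smooth on `Ioi rp` when `0 < rp`. -/
lemma contDiffOn_coefDel (M k : ℝ) {rp : ℝ} (hrp : 0 < rp) :
    ContDiffOn ℝ (⊤ : ℕ∞) (fun s : ℝ => ((Del M k s / s ^ 2 : ℝ) : ℂ)) (Ioi rp) := by
  apply Complex.ofRealCLM.contDiff.comp_contDiffOn
  apply ContDiffOn.div
  · unfold Del; fun_prop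
  · fun_prop
  · intro x hx
    exact pow_ne_zero _ (ne_of_gt (lt_trans hrp hx))

lemma coefDel_diffAt (M k : ℝ) {rp r : ℝ} (hrp : 0 < rp) (hr : rp < r) :
    DifferentiableAt ℝ (fun s : ℝ => ((Del M k s / s ^ 2 : ℝ) : ℂ)) r := by
  have := (contDiffOn_coefDel M k hrp).contDiffAt (Ioi_mem_nhds hr)
  exact this.differentiableAt (by simp)

lemma smOm_opL (hu : SmoothOnOm rp u) (hrp : 0 < rp) : SmoothOnOm rp (opL M k u) :=
  smOm_add (smOm_dT hu) (smOm_rmul (contDiffOn_coefDel M k hrp) (smOm_dR hu))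

lemma smOm_opLb (hu : SmoothOnOm rp u) (hrp : 0 < rp) : SmoothOnOm rp (opLb M k u) :=
  smOm_sub (smOm_dT hu) (smOm_rmul (contDiffOn_coefDel M k hrp) (smOm_dR hu))

/-! #### The angular operator: normal form -/

/-- Normal form of `angP` (Leibniz-expanded). -/
def NF (u : F4) : F4 := fun t r ϑ φ =>
  -((Real.cos ϑ / Real.sin ϑ : ℝ) : ℂ) * dTh u t r ϑ φ
  - dTh (dTh u) t r ϑ φ
  - (((Real.sin ϑ) ^ 2 : ℝ) : ℂ)⁻¹ * dPh (dPh u) t r ϑ φ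
  - 4 * Complex.I * ((Real.cos ϑ / (Real.sin ϑ) ^ 2 : ℝ) : ℂ) * dPh u t r ϑ φ
  + 4 * (((Real.cos ϑ / Real.sin ϑ) ^ 2 : ℝ) : ℂ) * u t r ϑ φ
  + 4 * u t r ϑ φ

lemma angP_eq (hu : SmoothOnOm rp u) (hp : (t, r, ϑ, φ) ∈ OmSet rp) :
    angP u t r ϑ φ = NF u t r ϑ φ := by
  have hsin : Real.sin ϑ ≠ 0 := (Real.sin_pos_of_pos_of_lt_pi hp.2.1 hp.2.2).ne'
  have h1 : HasDerivAt (fun x => ((Real.sin x : ℝ) : ℂ)) ((Real.cos ϑ : ℝ) : ℂ) ϑ :=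
    (Real.hasDerivAt_sin ϑ).ofReal_comp
  have h2 : HasDerivAt (fun x => dTh u t r x φ) (dTh (dTh u) t r ϑ φ) ϑ :=
    (sdTh (smOm_dTh hu) hp).hasDerivAt
  have h3 : deriv (fun x => ((Real.sin x : ℝ) : ℂ) * dTh u t r x φ) ϑ = _ :=
    (h1.mul h2).deriv
  simp only [angP, NF, h3]
  have hs : ((Real.sin ϑ : ℝ) : ℂ) ≠ 0 := Complex.ofReal_ne_zero.mpr hsin
  push_cast at hs ⊢
  field_simp [hs]
  ring

lemma angP_congr (h : ∀ t r ϑ φ, (t, r, ϑ, φ) ∈ OmSet rp → u t r ϑ φ = v t r ϑ φ)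
    (hp : (t, r, ϑ, φ) ∈ OmSet rp) : angP u t r ϑ φ = angP v t r ϑ φ := by
  have hderiv : deriv (fun x => ((Real.sin x : ℝ) : ℂ) * dTh u t r x φ) ϑ
      = deriv (fun x => ((Real.sin x : ℝ) : ℂ) * dTh v t r x φ) ϑ := by
    apply Filter.EventuallyEq.deriv_eq
    filter_upwards [Ioo_mem_nhds hp.2.1 hp.2.2] with s hs
    rw [dTh_congr h (show (t, r, s, φ) ∈ OmSet rp from ⟨hp.1, hs.1, hs.2⟩)]
  simp only [angP]
  rw [hderiv, dPh_congr (fun a b c d hq => dPh_congr h hq) hp, dPh_congr h hp,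
    h t r ϑ φ hp]

lemma smOm_contDiffOn_thcoef {h : ℝ → ℂ} (hh : ContDiffOn ℝ (⊤ : ℕ∞) h (Ioo 0 Real.pi)) :
    ContDiffOn ℝ (⊤ : ℕ∞) (fun p : P4 => h p.2.2.1) (OmSet rp) :=
  hh.comp (contDiff_snd.snd.fst.contDiffOn (s := OmSet rp)) fun p hp => ⟨hp.2.1, hp.2.2⟩

lemma cd_c1 : ContDiffOn ℝ (⊤ : ℕ∞)
    (fun x : ℝ => ((Real.cos x / Real.sin x : ℝ) : ℂ)) (Ioo 0 Real.pi) := by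
  apply Complex.ofRealCLM.contDiff.comp_contDiffOn
  exact ContDiffOn.div (Real.contDiff_cos.contDiffOn) (Real.contDiff_sin.contDiffOn)
    fun x hx => (Real.sin_pos_of_pos_of_lt_pi hx.1 hx.2).ne'

lemma cd_c2 : ContDiffOn ℝ (⊤ : ℕ∞)
    (fun x : ℝ => ((((Real.sin x) ^ 2 : ℝ)) : ℂ)⁻¹) (Ioo 0 Real.pi) := by
  apply ContDiffOn.inv
  · exact Complex.ofRealCLM.contDiff.comp_contDiffOn
      ((Real.contDiff_sin.pow 2).contDiffOn)
  · intro x hx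
    exact Complex.ofReal_ne_zero.mpr
      (pow_ne_zero _ (Real.sin_pos_of_pos_of_lt_pi hx.1 hx.2).ne')

lemma cd_c3 : ContDiffOn ℝ (⊤ : ℕ∞)
    (fun x : ℝ => ((Real.cos x / (Real.sin x) ^ 2 : ℝ) : ℂ)) (Ioo 0 Real.pi) := by
  apply Complex.ofRealCLM.contDiff.comp_contDiffOn
  exact ContDiffOn.div (Real.contDiff_cos.contDiffOn)
    ((Real.contDiff_sin.pow 2).contDiffOn)
    fun x hx => pow_ne_zero _ (Real.sin_pos_of_pos_of_lt_pi hx.1 hx.2).ne'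

lemma cd_c4 : ContDiffOn ℝ (⊤ : ℕ∞)
    (fun x : ℝ => (((Real.cos x / Real.sin x) ^ 2 : ℝ) : ℂ)) (Ioo 0 Real.pi) := by
  apply Complex.ofRealCLM.contDiff.comp_contDiffOn
  exact (ContDiffOn.div (Real.contDiff_cos.contDiffOn) (Real.contDiff_sin.contDiffOn)
    fun x hx => (Real.sin_pos_of_pos_of_lt_pi hx.1 hx.2).ne').pow 2

lemma smOm_NF (hu : SmoothOnOm rp u) : SmoothOnOm rp (NF u) := by
  have h1 : SmoothOnOm rp (fun a b c d =>
      -((Real.cos c / Real.sin c : ℝ) : ℂ) * dTh u a b c d) :=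
    smOm_thmul (cd_c1.neg) (smOm_dTh hu)
  have h2 : SmoothOnOm rp (dTh (dTh u)) := smOm_dTh (smOm_dTh hu)
  have h3 : SmoothOnOm rp (fun a b c d =>
      (((Real.sin c) ^ 2 : ℝ) : ℂ)⁻¹ * dPh (dPh u) a b c d) :=
    smOm_thmul cd_c2 (smOm_dPh (smOm_dPh hu))
  have h4 : SmoothOnOm rp (fun a b c d =>
      4 * Complex.I * ((Real.cos c / (Real.sin c) ^ 2 : ℝ) : ℂ) * dPh u a b c d) :=
    smOm_thmul ((contDiffOn_const (c := 4 * Complex.I)).mul cd_c3) (smOm_dPh hu)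
  have h5 : SmoothOnOm rp (fun a b c d =>
      4 * (((Real.cos c / Real.sin c) ^ 2 : ℝ) : ℂ) * u a b c d) :=
    smOm_thmul ((contDiffOn_const (c := (4 : ℂ))).mul cd_c4) hu
  have h6 : SmoothOnOm rp (fun a b c d => (4 : ℂ) * u a b c d) := smOm_cmul 4 hu
  exact ((((ContDiffOn.sub h1 h2).sub h3).sub h4).add h5).add h6

lemma smOm_angP (hu : SmoothOnOm rp u) : SmoothOnOm rp (angP u) :=
  (smOm_NF hu).congr fun q hq => by
    obtain ⟨t, r, ϑ, φ⟩ := q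
    exact angP_eq hu hq

/-! #### Linearity of the angular operators -/

lemma angP_add (hu : SmoothOnOm rp u) (hv : SmoothOnOm rp v) (hp : (t, r, ϑ, φ) ∈ OmSet rp) :
    angP (fun a b c d => u a b c d + v a b c d) t r ϑ φ
      = angP u t r ϑ φ + angP v t r ϑ φ := by
  rw [angP_eq (smOm_add hu hv) hp, angP_eq hu hp, angP_eq hv hp]
  simp only [NF]
  rw [dTh_add u v (sdTh hu hp) (sdTh hv hp),
    dTh_congr (fun a b c d hq => dTh_add u v (sdTh hu hq) (sdTh hv hq)) hp,
    dTh_add (dTh u) (dTh v) (sdTh (smOm_dTh hu) hp) (sdTh (smOm_dTh hv) hp),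
    dPh_congr (fun a b c d hq => dPh_add u v (sdPh hu hq) (sdPh hv hq)) hp,
    dPh_add (dPh u) (dPh v) (sdPh (smOm_dPh hu) hp) (sdPh (smOm_dPh hv) hp),
    dPh_add u v (sdPh hu hp) (sdPh hv hp)]
  ring

lemma angP_sub (hu : SmoothOnOm rp u) (hv : SmoothOnOm rp v) (hp : (t, r, ϑ, φ) ∈ OmSet rp) :
    angP (fun a b c d => u a b c d - v a b c d) t r ϑ φ
      = angP u t r ϑ φ - angP v t r ϑ φ := by
  rw [angP_eq (smOm_sub hu hv) hp, angP_eq hu hp, angP_eq hv hp]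
  simp only [NF]
  rw [dTh_sub u v (sdTh hu hp) (sdTh hv hp),
    dTh_congr (fun a b c d hq => dTh_sub u v (sdTh hu hq) (sdTh hv hq)) hp,
    dTh_sub (dTh u) (dTh v) (sdTh (smOm_dTh hu) hp) (sdTh (smOm_dTh hv) hp),
    dPh_congr (fun a b c d hq => dPh_sub u v (sdPh hu hq) (sdPh hv hq)) hp,
    dPh_sub (dPh u) (dPh v) (sdPh (smOm_dPh hu) hp) (sdPh (smOm_dPh hv) hp),
    dPh_sub u v (sdPh hu hp) (sdPh hv hp)]
  ring

lemma angP_cmul (c : ℂ) (hu : SmoothOnOm rp u) (hp : (t, r, ϑ, φ) ∈ OmSet rp) :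
    angP (fun a b c' d => c * u a b c' d) t r ϑ φ = c * angP u t r ϑ φ := by
  rw [angP_eq (smOm_cmul c hu) hp, angP_eq hu hp]
  simp only [NF]
  rw [dTh_cmul u c (sdTh hu hp),
    dTh_congr (fun a b c' d hq => dTh_cmul u c (sdTh hu hq)) hp,
    dTh_cmul (dTh u) c (sdTh (smOm_dTh hu) hp),
    dPh_congr (fun a b c' d hq => dPh_cmul u c (sdPh hu hq)) hp,
    dPh_cmul (dPh u) c (sdPh (smOm_dPh hu) hp),
    dPh_cmul u c (sdPh hu hp)]
  ring

/-! #### The operator `𝓛(𝓛−2)` -/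

lemma angSq_congr (h : ∀ t r ϑ φ, (t, r, ϑ, φ) ∈ OmSet rp → u t r ϑ φ = v t r ϑ φ)
    (hp : (t, r, ϑ, φ) ∈ OmSet rp) : angSqP u t r ϑ φ = angSqP v t r ϑ φ := by
  simp only [angSqP]
  exact angP_congr (fun a b c d hq => by rw [angP_congr h hq, h a b c d hq]) hp

lemma smOm_angSq (hu : SmoothOnOm rp u) : SmoothOnOm rp (angSqP u) :=
  smOm_angP (smOm_sub (smOm_angP hu) (smOm_cmul 2 hu))

lemma angSq_add (hu : SmoothOnOm rp u) (hv : SmoothOnOm rp v) (hp : (t, r, ϑ, φ) ∈ OmSet rp) :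
    angSqP (fun a b c d => u a b c d + v a b c d) t r ϑ φ
      = angSqP u t r ϑ φ + angSqP v t r ϑ φ := by
  simp only [angSqP]
  have h : ∀ a b c d, (a, b, c, d) ∈ OmSet rp →
      angP (fun a b c d => u a b c d + v a b c d) a b c d
          - 2 * (fun a b c d => u a b c d + v a b c d) a b c d
        = (angP u a b c d - 2 * u a b c d) + (angP v a b c d - 2 * v a b c d) := by
    intro a b c d hq
    simp only
    rw [angP_add hu hv hq]
    ring
  rw [angP_congr h hp,
    angP_add (smOm_sub (smOm_angP hu) (smOm_cmul 2 hu))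
      (smOm_sub (smOm_angP hv) (smOm_cmul 2 hv)) hp]

lemma angSq_sub (hu : SmoothOnOm rp u) (hv : SmoothOnOm rp v) (hp : (t, r, ϑ, φ) ∈ OmSet rp) :
    angSqP (fun a b c d => u a b c d - v a b c d) t r ϑ φ
      = angSqP u t r ϑ φ - angSqP v t r ϑ φ := by
  simp only [angSqP]
  have h : ∀ a b c d, (a, b, c, d) ∈ OmSet rp →
      angP (fun a b c d => u a b c d - v a b c d) a b c d
          - 2 * (fun a b c d => u a b c d - v a b c d) a b c d
        = (angP u a b c d - 2 * u a b c d) - (angP v a b c d - 2 * v a b c d) := by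
    intro a b c d hq
    simp only
    rw [angP_sub hu hv hq]
    ring
  rw [angP_congr h hp,
    angP_sub (smOm_sub (smOm_angP hu) (smOm_cmul 2 hu))
      (smOm_sub (smOm_angP hv) (smOm_cmul 2 hv)) hp]

lemma angSq_cmul (c : ℂ) (hu : SmoothOnOm rp u) (hp : (t, r, ϑ, φ) ∈ OmSet rp) :
    angSqP (fun a b c' d => c * u a b c' d) t r ϑ φ = c * angSqP u t r ϑ φ := by
  simp only [angSqP]
  have h : ∀ a b c' d, (a, b, c', d) ∈ OmSet rp →
      angP (fun a b c' d => c * u a b c' d) a b c' d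
          - 2 * (fun a b c' d => c * u a b c' d) a b c' d
        = c * (angP u a b c' d - 2 * u a b c' d) := by
    intro a b c' d hq
    simp only
    rw [angP_cmul c hu hq]
    ring
  rw [angP_congr h hp, angP_cmul c (smOm_sub (smOm_angP hu) (smOm_cmul 2 hu)) hp]

/-! #### The operator `w ↦ (Δ/r²)·∂ᵣ∂ₜw` and commutation with the angular operator -/

/-- `(Δ/r²) ∂ᵣ ∂ₜ`. -/
def Dop (M k : ℝ) (v : F4) : F4 := fun t r ϑ φ =>
  ((Del M k r / r ^ 2 : ℝ) : ℂ) * dR (dT v) t r ϑ φ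

lemma Dop_def (M k : ℝ) (v : F4) : Dop M k v
    = fun t r ϑ φ => ((Del M k r / r ^ 2 : ℝ) : ℂ) * dR (dT v) t r ϑ φ := rfl

lemma NF_def (u : F4) : NF u = fun t r ϑ φ =>
  -((Real.cos ϑ / Real.sin ϑ : ℝ) : ℂ) * dTh u t r ϑ φ
  - dTh (dTh u) t r ϑ φ
  - (((Real.sin ϑ) ^ 2 : ℝ) : ℂ)⁻¹ * dPh (dPh u) t r ϑ φ
  - 4 * Complex.I * ((Real.cos ϑ / (Real.sin ϑ) ^ 2 : ℝ) : ℂ) * dPh u t r ϑ φ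
  + 4 * (((Real.cos ϑ / Real.sin ϑ) ^ 2 : ℝ) : ℂ) * u t r ϑ φ
  + 4 * u t r ϑ φ := rfl

lemma smOm_Dop (hrp : 0 < rp) (hv : SmoothOnOm rp v) : SmoothOnOm rp (Dop M k v) :=
  smOm_rmul (contDiffOn_coefDel M k hrp) (smOm_dR (smOm_dT hv))

lemma Dop_congr (h : ∀ t r ϑ φ, (t, r, ϑ, φ) ∈ OmSet rp → u t r ϑ φ = v t r ϑ φ)
    (hp : (t, r, ϑ, φ) ∈ OmSet rp) : Dop M k u t r ϑ φ = Dop M k v t r ϑ φ := by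
  simp only [Dop]
  rw [dR_congr (fun a b c d hq => dT_congr h hq) hp]

lemma Dop_add (hu : SmoothOnOm rp u) (hv : SmoothOnOm rp v) (hp : (t, r, ϑ, φ) ∈ OmSet rp) :
    Dop M k (fun a b c d => u a b c d + v a b c d) t r ϑ φ
      = Dop M k u t r ϑ φ + Dop M k v t r ϑ φ := by
  simp only [Dop]
  rw [dR_congr (fun a b c d hq => dT_add u v (sdT hu hq) (sdT hv hq)) hp,
    dR_add (dT u) (dT v) (sdR (smOm_dT hu) hp) (sdR (smOm_dT hv) hp)]
  ring

lemma Dop_sub (hu : SmoothOnOm rp u) (hv : SmoothOnOm rp v) (hp : (t, r, ϑ, φ) ∈ OmSet rp) :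
    Dop M k (fun a b c d => u a b c d - v a b c d) t r ϑ φ
      = Dop M k u t r ϑ φ - Dop M k v t r ϑ φ := by
  simp only [Dop]
  rw [dR_congr (fun a b c d hq => dT_sub u v (sdT hu hq) (sdT hv hq)) hp,
    dR_sub (dT u) (dT v) (sdR (smOm_dT hu) hp) (sdR (smOm_dT hv) hp)]
  ring

lemma Dop_cmul (c : ℂ) (hu : SmoothOnOm rp u) (hp : (t, r, ϑ, φ) ∈ OmSet rp) :
    Dop M k (fun a b c' d => c * u a b c' d) t r ϑ φ = c * Dop M k u t r ϑ φ := by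
  simp only [Dop]
  rw [dR_congr (fun a b c' d hq => dT_cmul u c (sdT hu hq)) hp,
    dR_cmul (dT u) c (sdR (smOm_dT hu) hp)]
  ring

lemma Dop_thmul (h : ℝ → ℂ) (hu : SmoothOnOm rp u) (hp : (t, r, ϑ, φ) ∈ OmSet rp) :
    Dop M k (fun a b c' d => h c' * u a b c' d) t r ϑ φ = h ϑ * Dop M k u t r ϑ φ := by
  simp only [Dop]
  rw [dR_congr (fun a b c' d hq => dT_thmul u h (sdT hu hq)) hp,
    dR_thmul (dT u) h (sdR (smOm_dT hu) hp)]
  ring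

lemma dTh_Dop (hv : SmoothOnOm rp v) (hp : (t, r, ϑ, φ) ∈ OmSet rp) :
    dTh (Dop M k v) t r ϑ φ = Dop M k (dTh v) t r ϑ φ := by
  simp only [Dop_def]
  rw [dTh_rmul (dR (dT v)) (fun s => ((Del M k s / s ^ 2 : ℝ) : ℂ))
      (sdTh (smOm_dR (smOm_dT hv)) hp),
    dTh_dR_comm (smOm_dT hv) hp,
    dR_congr (fun a b c d hq => dTh_dT_comm hv hq) hp]

lemma dPh_Dop (hv : SmoothOnOm rp v) (hp : (t, r, ϑ, φ) ∈ OmSet rp) :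
    dPh (Dop M k v) t r ϑ φ = Dop M k (dPh v) t r ϑ φ := by
  simp only [Dop_def]
  rw [dPh_rmul (dR (dT v)) (fun s => ((Del M k s / s ^ 2 : ℝ) : ℂ))
      (sdPh (smOm_dR (smOm_dT hv)) hp),
    dPh_dR_comm (smOm_dT hv) hp,
    dR_congr (fun a b c d hq => dPh_dT_comm hv hq) hp]

lemma angP_Dop (hrp : 0 < rp) (hv : SmoothOnOm rp v) (hp : (t, r, ϑ, φ) ∈ OmSet rp) :
    angP (Dop M k v) t r ϑ φ = Dop M k (angP v) t r ϑ φ := by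
  rw [angP_eq (smOm_Dop hrp hv) hp, Dop_congr (fun a b c d hq => angP_eq hv hq) hp]
  simp only [NF_def]
  -- left side: push `Dop` out of every term
  rw [dTh_Dop hv hp,
    dTh_congr (fun a b c d hq => dTh_Dop hv hq) hp, dTh_Dop (smOm_dTh hv) hp,
    dPh_congr (fun a b c d hq => dPh_Dop hv hq) hp, dPh_Dop (smOm_dPh hv) hp,
    dPh_Dop hv hp]
  -- right side: expand `Dop` over the sum
  have s1 : SmoothOnOm rp (fun a b c d =>
      -((Real.cos c / Real.sin c : ℝ) : ℂ) * dTh v a b c d) :=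
    smOm_thmul (cd_c1.neg) (smOm_dTh hv)
  have s2 : SmoothOnOm rp (dTh (dTh v)) := smOm_dTh (smOm_dTh hv)
  have s3 : SmoothOnOm rp (fun a b c d =>
      (((Real.sin c) ^ 2 : ℝ) : ℂ)⁻¹ * dPh (dPh v) a b c d) :=
    smOm_thmul cd_c2 (smOm_dPh (smOm_dPh hv))
  have s4 : SmoothOnOm rp (fun a b c d =>
      4 * Complex.I * ((Real.cos c / (Real.sin c) ^ 2 : ℝ) : ℂ) * dPh v a b c d) :=
    smOm_thmul ((contDiffOn_const (c := 4 * Complex.I)).mul cd_c3) (smOm_dPh hv)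
  have s5 : SmoothOnOm rp (fun a b c d =>
      4 * (((Real.cos c / Real.sin c) ^ 2 : ℝ) : ℂ) * v a b c d) :=
    smOm_thmul ((contDiffOn_const (c := (4 : ℂ))).mul cd_c4) hv
  have s6 : SmoothOnOm rp (fun a b c d => (4 : ℂ) * v a b c d) := smOm_cmul 4 hv
  have s12 : SmoothOnOm rp (fun a b c d =>
      -((Real.cos c / Real.sin c : ℝ) : ℂ) * dTh v a b c d
      - dTh (dTh v) a b c d) := s1.sub s2
  have s13 : SmoothOnOm rp (fun a b c d =>
      -((Real.cos c / Real.sin c : ℝ) : ℂ) * dTh v a b c d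
      - dTh (dTh v) a b c d
      - (((Real.sin c) ^ 2 : ℝ) : ℂ)⁻¹ * dPh (dPh v) a b c d) := s12.sub s3
  have s14 : SmoothOnOm rp (fun a b c d =>
      -((Real.cos c / Real.sin c : ℝ) : ℂ) * dTh v a b c d
      - dTh (dTh v) a b c d
      - (((Real.sin c) ^ 2 : ℝ) : ℂ)⁻¹ * dPh (dPh v) a b c d
      - 4 * Complex.I * ((Real.cos c / (Real.sin c) ^ 2 : ℝ) : ℂ) * dPh v a b c d) := s13.sub s4
  have s15 : SmoothOnOm rp (fun a b c d =>
      -((Real.cos c / Real.sin c : ℝ) : ℂ) * dTh v a b c d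
      - dTh (dTh v) a b c d
      - (((Real.sin c) ^ 2 : ℝ) : ℂ)⁻¹ * dPh (dPh v) a b c d
      - 4 * Complex.I * ((Real.cos c / (Real.sin c) ^ 2 : ℝ) : ℂ) * dPh v a b c d
      + 4 * (((Real.cos c / Real.sin c) ^ 2 : ℝ) : ℂ) * v a b c d) := s14.add s5
  rw [Dop_add s15 s6 hp,
    Dop_add s14 s5 hp,
    Dop_sub s13 s4 hp,
    Dop_sub s12 s3 hp,
    Dop_sub s1 s2 hp,
    Dop_thmul (fun x => -((Real.cos x / Real.sin x : ℝ) : ℂ)) (smOm_dTh hv) hp,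
    Dop_thmul (fun x => (((Real.sin x) ^ 2 : ℝ) : ℂ)⁻¹) (smOm_dPh (smOm_dPh hv)) hp,
    Dop_thmul (fun x => 4 * Complex.I * ((Real.cos x / (Real.sin x) ^ 2 : ℝ) : ℂ))
      (smOm_dPh hv) hp,
    Dop_thmul (fun x => 4 * (((Real.cos x / Real.sin x) ^ 2 : ℝ) : ℂ)) hv hp,
    Dop_cmul 4 hv hp]

lemma angSq_Dop (hrp : 0 < rp) (hv : SmoothOnOm rp v) (hp : (t, r, ϑ, φ) ∈ OmSet rp) :
    angSqP (Dop M k v) t r ϑ φ = Dop M k (angSqP v) t r ϑ φ := by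
  simp only [angSqP]
  have h : ∀ a b c d, (a, b, c, d) ∈ OmSet rp →
      angP (Dop M k v) a b c d - 2 * Dop M k v a b c d
        = Dop M k (fun a b c d => angP v a b c d - 2 * v a b c d) a b c d := by
    intro a b c d hq
    rw [angP_Dop hrp hv hq, Dop_sub (smOm_angP hv) (smOm_cmul 2 hv) hq,
      Dop_cmul 2 hv hq]
  rw [angP_congr h hp, angP_Dop hrp (smOm_sub (smOm_angP hv) (smOm_cmul 2 hv)) hp]

/-! #### Linearity and locality of `L`, `L̲`; the commutator identity -/

lemma opL_def (M k : ℝ) (u : F4) : opL M k u = fun t r ϑ φ =>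
    dT u t r ϑ φ + ((Del M k r / r ^ 2 : ℝ) : ℂ) * dR u t r ϑ φ := rfl

lemma opLb_def (M k : ℝ) (u : F4) : opLb M k u = fun t r ϑ φ =>
    dT u t r ϑ φ - ((Del M k r / r ^ 2 : ℝ) : ℂ) * dR u t r ϑ φ := rfl

lemma opL_congr (h : ∀ t r ϑ φ, (t, r, ϑ, φ) ∈ OmSet rp → u t r ϑ φ = v t r ϑ φ)
    (hp : (t, r, ϑ, φ) ∈ OmSet rp) : opL M k u t r ϑ φ = opL M k v t r ϑ φ := by
  simp only [opL]
  rw [dT_congr h hp, dR_congr h hp]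

lemma opLb_congr (h : ∀ t r ϑ φ, (t, r, ϑ, φ) ∈ OmSet rp → u t r ϑ φ = v t r ϑ φ)
    (hp : (t, r, ϑ, φ) ∈ OmSet rp) : opLb M k u t r ϑ φ = opLb M k v t r ϑ φ := by
  simp only [opLb]
  rw [dT_congr h hp, dR_congr h hp]

lemma opL_add (hu : SmoothOnOm rp u) (hv : SmoothOnOm rp v) (hp : (t, r, ϑ, φ) ∈ OmSet rp) :
    opL M k (fun a b c d => u a b c d + v a b c d) t r ϑ φ
      = opL M k u t r ϑ φ + opL M k v t r ϑ φ := by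
  simp only [opL]
  rw [dT_add u v (sdT hu hp) (sdT hv hp), dR_add u v (sdR hu hp) (sdR hv hp)]
  ring

lemma opLb_add (hu : SmoothOnOm rp u) (hv : SmoothOnOm rp v) (hp : (t, r, ϑ, φ) ∈ OmSet rp) :
    opLb M k (fun a b c d => u a b c d + v a b c d) t r ϑ φ
      = opLb M k u t r ϑ φ + opLb M k v t r ϑ φ := by
  simp only [opLb]
  rw [dT_add u v (sdT hu hp) (sdT hv hp), dR_add u v (sdR hu hp) (sdR hv hp)]
  ring

lemma opL_cmul (c : ℂ) (hu : SmoothOnOm rp u) (hp : (t, r, ϑ, φ) ∈ OmSet rp) :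
    opL M k (fun a b c' d => c * u a b c' d) t r ϑ φ = c * opL M k u t r ϑ φ := by
  simp only [opL]
  rw [dT_cmul u c (sdT hu hp), dR_cmul u c (sdR hu hp)]
  ring

lemma opLb_cmul (c : ℂ) (hu : SmoothOnOm rp u) (hp : (t, r, ϑ, φ) ∈ OmSet rp) :
    opLb M k (fun a b c' d => c * u a b c' d) t r ϑ φ = c * opLb M k u t r ϑ φ := by
  simp only [opLb]
  rw [dT_cmul u c (sdT hu hp), dR_cmul u c (sdR hu hp)]
  ring

/-- The key commutator identity `LLv − L̲L̲v = 4(Δ/r²)∂ᵣ∂ₜv`. -/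
lemma Kid (hrp : 0 < rp) (hv : SmoothOnOm rp v) (hp : (t, r, ϑ, φ) ∈ OmSet rp) :
    opL M k (opL M k v) t r ϑ φ - opLb M k (opLb M k v) t r ϑ φ
      = 4 * Dop M k v t r ϑ φ := by
  have hg : DifferentiableAt ℝ (fun s : ℝ => ((Del M k s / s ^ 2 : ℝ) : ℂ)) r :=
    coefDel_diffAt M k hrp hp.1
  have hmul : SmoothOnOm rp (fun a b c d =>
      ((Del M k b / b ^ 2 : ℝ) : ℂ) * dR v a b c d) :=
    smOm_rmul (contDiffOn_coefDel M k hrp) (smOm_dR hv)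
  simp only [opL_def, opLb_def, Dop]
  rw [dT_add (dT v) _ (sdT (smOm_dT hv) hp) (sdT hmul hp),
    dT_sub (dT v) _ (sdT (smOm_dT hv) hp) (sdT hmul hp),
    dT_rmul (dR v) (fun s : ℝ => ((Del M k s / s ^ 2 : ℝ) : ℂ)) (sdT (smOm_dR hv) hp),
    dR_add (dT v) _ (sdR (smOm_dT hv) hp) (sdR hmul hp),
    dR_sub (dT v) _ (sdR (smOm_dT hv) hp) (sdR hmul hp),
    dR_rmul (dR v) (fun s : ℝ => ((Del M k s / s ^ 2 : ℝ) : ℂ)) hg (sdR (smOm_dR hv) hp),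
    dT_dR_comm hv hp]
  ring
/-- The algebraic identity relating the mixed higher order
Regge–Wheeler boundary combination to `Ψᴰ` and `Ψᴿ`, where
`𝓛(𝓛−2)Φ = Ψ⁺ − (Ψ⁻)*`, `Ψᴰ = Ψ⁺ − (Ψ⁻)*` and `Ψᴿ = Ψ⁺ + (Ψ⁻)* + 12M∂ₜΦ`. -/
theorem statement5
    (M k rp : ℝ) (hM : 0 < M) (hk : 0 < k) (hrp : 0 < rp)
    (hroot : rp + k ^ 2 * rp ^ 3 - 2 * M = 0)
    (Ψp Ψm Φ : F4)
    (hΨp : SmoothOnOm rp Ψp) (hΨm : SmoothOnOm rp Ψm) (hΦ : SmoothOnOm rp Φ)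
    (hΦeq : ∀ t r ϑ φ : ℝ, (t, r, ϑ, φ) ∈ OmSet rp →
      angSqP Φ t r ϑ φ = Ψp t r ϑ φ - conjF Ψm t r ϑ φ)
    (PsiD PsiR : F4)
    (hD : PsiD = fun t r ϑ φ => Ψp t r ϑ φ - conjF Ψm t r ϑ φ)
    (hR : PsiR = fun t r ϑ φ =>
      Ψp t r ϑ φ + conjF Ψm t r ϑ φ + 12 * (M : ℂ) * dT Φ t r ϑ φ) :
    ∀ t r ϑ φ : ℝ, (t, r, ϑ, φ) ∈ OmSet rp →
      opL M k (opL M k Ψp) t r ϑ φ + opLb M k (opLb M k (conjF Ψm)) t r ϑ φ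
        + ((6 * M : ℝ) : ℂ)⁻¹ *
            angSqP (fun t r ϑ φ =>
              opL M k Ψp t r ϑ φ - opLb M k (conjF Ψm) t r ϑ φ) t r ϑ φ
      =
      (1 / 2 : ℂ) * (opL M k (opL M k PsiR) t r ϑ φ + opLb M k (opLb M k PsiR) t r ϑ φ)
        + ((12 * M : ℝ) : ℂ)⁻¹ *
            angSqP (fun t r ϑ φ =>
              opL M k PsiR t r ϑ φ - opLb M k PsiR t r ϑ φ) t r ϑ φ
        - 6 * (M : ℂ) *
            (opL M k (opL M k (dT Φ)) t r ϑ φ + opLb M k (opLb M k (dT Φ)) t r ϑ φ)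
        + ((6 * M : ℝ) : ℂ)⁻¹ * angSqP (dT PsiD) t r ϑ φ := by
  intro t r ϑ φ hp
  subst hD
  subst hR
  have hB : SmoothOnOm rp (conjF Ψm) := smOm_conj hΨm
  have hP : SmoothOnOm rp (dT Φ) := smOm_dT hΦ
  have hAB : SmoothOnOm rp (fun a b c d => Ψp a b c d + conjF Ψm a b c d) :=
    smOm_add hΨp hB
  have hcP : SmoothOnOm rp (fun a b c d => 12 * (M : ℂ) * dT Φ a b c d) :=
    smOm_cmul _ hP
  have hRpt : ∀ a b c d, (a, b, c, d) ∈ OmSet rp →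
      opL M k (fun t r ϑ φ => Ψp t r ϑ φ + conjF Ψm t r ϑ φ
        + 12 * (M : ℂ) * dT Φ t r ϑ φ) a b c d
        = opL M k Ψp a b c d + opL M k (conjF Ψm) a b c d
          + 12 * (M : ℂ) * opL M k (dT Φ) a b c d := by
    intro a b c d hq
    rw [opL_add hAB hcP hq, opL_add hΨp hB hq, opL_cmul _ hP hq]
  have hRptb : ∀ a b c d, (a, b, c, d) ∈ OmSet rp →
      opLb M k (fun t r ϑ φ => Ψp t r ϑ φ + conjF Ψm t r ϑ φ
        + 12 * (M : ℂ) * dT Φ t r ϑ φ) a b c d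
        = opLb M k Ψp a b c d + opLb M k (conjF Ψm) a b c d
          + 12 * (M : ℂ) * opLb M k (dT Φ) a b c d := by
    intro a b c d hq
    rw [opLb_add hAB hcP hq, opLb_add hΨp hB hq, opLb_cmul _ hP hq]
  have h1 : opL M k (opL M k (fun t r ϑ φ => Ψp t r ϑ φ + conjF Ψm t r ϑ φ
        + 12 * (M : ℂ) * dT Φ t r ϑ φ)) t r ϑ φ
      = opL M k (opL M k Ψp) t r ϑ φ + opL M k (opL M k (conjF Ψm)) t r ϑ φ
        + 12 * (M : ℂ) * opL M k (opL M k (dT Φ)) t r ϑ φ := by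
    rw [opL_congr hRpt hp,
      opL_add (smOm_add (smOm_opL hΨp hrp) (smOm_opL hB hrp))
        (smOm_cmul _ (smOm_opL hP hrp)) hp,
      opL_add (smOm_opL hΨp hrp) (smOm_opL hB hrp) hp,
      opL_cmul _ (smOm_opL hP hrp) hp]
  have h2 : opLb M k (opLb M k (fun t r ϑ φ => Ψp t r ϑ φ + conjF Ψm t r ϑ φ
        + 12 * (M : ℂ) * dT Φ t r ϑ φ)) t r ϑ φ
      = opLb M k (opLb M k Ψp) t r ϑ φ + opLb M k (opLb M k (conjF Ψm)) t r ϑ φ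
        + 12 * (M : ℂ) * opLb M k (opLb M k (dT Φ)) t r ϑ φ := by
    rw [opLb_congr hRptb hp,
      opLb_add (smOm_add (smOm_opLb hΨp hrp) (smOm_opLb hB hrp))
        (smOm_cmul _ (smOm_opLb hP hrp)) hp,
      opLb_add (smOm_opLb hΨp hrp) (smOm_opLb hB hrp) hp,
      opLb_cmul _ (smOm_opLb hP hrp) hp]
  have hX2 : ∀ a b c d, (a, b, c, d) ∈ OmSet rp →
      (opL M k (fun t r ϑ φ => Ψp t r ϑ φ + conjF Ψm t r ϑ φ
          + 12 * (M : ℂ) * dT Φ t r ϑ φ) a b c d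
        - opLb M k (fun t r ϑ φ => Ψp t r ϑ φ + conjF Ψm t r ϑ φ
          + 12 * (M : ℂ) * dT Φ t r ϑ φ) a b c d)
        = 2 * (opL M k Ψp a b c d - opLb M k (conjF Ψm) a b c d)
          - 2 * dT (fun t r ϑ φ => Ψp t r ϑ φ - conjF Ψm t r ϑ φ) a b c d
          + 24 * (M : ℂ) * Dop M k Φ a b c d := by
    intro a b c d hq
    rw [hRpt a b c d hq, hRptb a b c d hq,
      dT_sub Ψp (conjF Ψm) (sdT hΨp hq) (sdT hB hq)]
    simp only [opL, opLb, Dop]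
    ring
  have sX1 : SmoothOnOm rp
      (fun a b c d => opL M k Ψp a b c d - opLb M k (conjF Ψm) a b c d) :=
    smOm_sub (smOm_opL hΨp hrp) (smOm_opLb hB hrp)
  have sX3 : SmoothOnOm rp (dT (fun t r ϑ φ => Ψp t r ϑ φ - conjF Ψm t r ϑ φ)) :=
    smOm_dT (smOm_sub hΨp hB)
  have sD : SmoothOnOm rp (Dop M k Φ) := smOm_Dop hrp hΦ
  have a2 : angSqP (fun t r ϑ φ =>
        opL M k (fun t r ϑ φ => Ψp t r ϑ φ + conjF Ψm t r ϑ φ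
          + 12 * (M : ℂ) * dT Φ t r ϑ φ) t r ϑ φ
        - opLb M k (fun t r ϑ φ => Ψp t r ϑ φ + conjF Ψm t r ϑ φ
          + 12 * (M : ℂ) * dT Φ t r ϑ φ) t r ϑ φ) t r ϑ φ
      = 2 * angSqP (fun t r ϑ φ =>
            opL M k Ψp t r ϑ φ - opLb M k (conjF Ψm) t r ϑ φ) t r ϑ φ
        - 2 * angSqP (dT (fun t r ϑ φ => Ψp t r ϑ φ - conjF Ψm t r ϑ φ)) t r ϑ φ
        + 24 * (M : ℂ) * angSqP (Dop M k Φ) t r ϑ φ := by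
    rw [angSq_congr hX2 hp,
      angSq_add (smOm_sub (smOm_cmul 2 sX1) (smOm_cmul 2 sX3)) (smOm_cmul _ sD) hp,
      angSq_sub (smOm_cmul 2 sX1) (smOm_cmul 2 sX3) hp,
      angSq_cmul 2 sX1 hp, angSq_cmul 2 sX3 hp, angSq_cmul _ sD hp]
  have a3 : angSqP (Dop M k Φ) t r ϑ φ
      = Dop M k Ψp t r ϑ φ - Dop M k (conjF Ψm) t r ϑ φ := by
    rw [angSq_Dop hrp hΦ hp, Dop_congr hΦeq hp, Dop_sub hΨp hB hp]
  have kA := Kid (M := M) (k := k) hrp hΨp hp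
  have kB := Kid (M := M) (k := k) hrp hB hp
  have kA' : opLb M k (opLb M k Ψp) t r ϑ φ
      = opL M k (opL M k Ψp) t r ϑ φ - 4 * Dop M k Ψp t r ϑ φ := by
    linear_combination -kA
  have kB' : opL M k (opL M k (conjF Ψm)) t r ϑ φ
      = opLb M k (opLb M k (conjF Ψm)) t r ϑ φ + 4 * Dop M k (conjF Ψm) t r ϑ φ := by
    linear_combination kB
  rw [h1, h2, a2, a3, kA', kB']
  have hM0 : (M : ℂ) ≠ 0 := Complex.ofReal_ne_zero.mpr hM.ne'
  push_cast
  field_simp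
  ring

end Grav
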